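/- arXiv:2208.00523 — 2 statements merged into one kernel-verified Lean document; each statement's English description precedes it below -/
import Mathlib

section
/- Let Γ ⊂ ℝⁿ (n ≥ 3) be an open, convex, symmetric cone with vertex at the origin satisfying Γₙ⁺ ⊆ Γ ⊆ Γ₁⁺, where Γₖ⁺ = {λ ∈ ℝⁿ : σⱼ(λ) > 0 for all 1 ≤ j ≤ k} and σⱼ is the j-th elementary symmetric polynomial. If there exists a nonzero λ ∈ ∂Γ₁⁺ ∩ Γ̄ (i.e. σ₁(λ) = 0 and λ ∈ Γ̄), then Γ = Γ₁⁺. -/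
open Finset

/-- The `k`-th elementary symmetric polynomial of `x : Fin n → ℝ`. -/
noncomputable def esymm (n k : ℕ) (x : Fin n → ℝ) : ℝ :=
  ∑ s ∈ Finset.powersetCard k (Finset.univ : Finset (Fin n)), ∏ i ∈ s, x i

/-- The Gårding cone `Γₖ⁺ = {λ : σⱼ(λ) > 0 for all 1 ≤ j ≤ k}`. -/
def GammaK (n k : ℕ) : Set (Fin n → ℝ) :=
  {x | ∀ j, 1 ≤ j → j ≤ k → 0 < esymm n j x}

lemma esymm_one' (n : ℕ) (x : Fin n → ℝ) : esymm n 1 x = ∑ i, x i := by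
  unfold esymm
  rw [Finset.powersetCard_one, Finset.sum_map]
  simp

lemma const_mem' (n : ℕ) (a : ℝ) (ha : 0 < a) : (fun _ => a : Fin n → ℝ) ∈ GammaK n n := by
  intro j hj1 hjn
  unfold esymm
  have : ∀ s ∈ Finset.powersetCard j (Finset.univ : Finset (Fin n)),
      (∏ _i ∈ s, a) = a ^ j := by
    intro s hs
    rw [Finset.prod_const, (Finset.mem_powersetCard.mp hs).2]
  rw [Finset.sum_congr rfl this, Finset.sum_const, Finset.card_powersetCard,
    Finset.card_univ, Fintype.card_fin, nsmul_eq_mul]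
  have hc : 0 < (n.choose j : ℝ) := by
    exact_mod_cast Nat.cast_pos.mpr (Nat.choose_pos hjn)
  positivity

theorem stmt0 (n : ℕ) (hn : 3 ≤ n) (Γ : Set (Fin n → ℝ))
    (hopen : IsOpen Γ) (hconv : Convex ℝ Γ)
    (hsym : ∀ σ : Equiv.Perm (Fin n), ∀ x ∈ Γ, x ∘ σ ∈ Γ)
    (hcone : ∀ s : ℝ, 0 < s → ∀ x ∈ Γ, s • x ∈ Γ)
    (hlow : GammaK n n ⊆ Γ) (hup : Γ ⊆ GammaK n 1)
    (lam : Fin n → ℝ) (hne : lam ≠ 0)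
    (hs1 : ∑ i, lam i = 0) (hcl : lam ∈ closure Γ) :
    Γ = GammaK n 1 := by
  -- closure is convex, permutation-invariant, scale-invariant
  have hCconv : Convex ℝ (closure Γ) := hconv.closure
  have hperm : ∀ σ : Equiv.Perm (Fin n), ∀ x ∈ closure Γ, x ∘ σ ∈ closure Γ := by
    intro σ x hx
    exact map_mem_closure (f := fun z : Fin n → ℝ => z ∘ σ)
      (continuous_pi fun i => continuous_apply (σ i)) hx (fun y hy => hsym σ y hy)
  have hscale : ∀ s : ℝ, 0 < s → ∀ x ∈ closure Γ, s • x ∈ closure Γ := by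
    intro s hs x hx
    exact map_mem_closure (continuous_const_smul s) hx (fun y hy => hcone s hs y hy)
  have h0 : (0 : Fin n → ℝ) ∈ closure Γ := by
    have htend : Filter.Tendsto (fun m : ℕ => ((m : ℝ) + 1)⁻¹ • lam) Filter.atTop
        (nhds ((0 : ℝ) • lam)) := by
      exact (tendsto_one_div_add_atTop_nhds_zero_nat.congr (by simp [one_div])).smul_const lam
    rw [zero_smul] at htend
    exact isClosed_closure.mem_of_tendsto htend
      (Filter.Eventually.of_forall fun m => hscale _ (by positivity) lam hcl)
  have haddC : ∀ x ∈ closure Γ, ∀ y ∈ closure Γ, x + y ∈ closure Γ := by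
    intro x hx y hy
    have h2 : (2 : ℝ) • ((1/2 : ℝ) • x + (1/2 : ℝ) • y) ∈ closure Γ :=
      hscale 2 (by norm_num) _ (hCconv hx hy (by norm_num) (by norm_num) (by norm_num))
    have : (2 : ℝ) • ((1/2 : ℝ) • x + (1/2 : ℝ) • y) = x + y := by
      rw [smul_add, smul_smul, smul_smul]; norm_num
    rwa [this] at h2
  have haddΓ : ∀ x ∈ Γ, ∀ y ∈ closure Γ, x + y ∈ Γ := by
    intro x hx y hy
    have hxi : x ∈ interior Γ := by rwa [hopen.interior_eq]
    have h2 : (1/2 : ℝ) • x + (1/2 : ℝ) • y ∈ interior Γ :=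
      hconv.combo_interior_closure_mem_interior hxi hy (by norm_num) (by norm_num) (by norm_num)
    rw [hopen.interior_eq] at h2
    have := hcone 2 (by norm_num) _ h2
    have heq : (2 : ℝ) • ((1/2 : ℝ) • x + (1/2 : ℝ) • y) = x + y := by
      rw [smul_add, smul_smul, smul_smul]; norm_num
    rwa [heq] at this
  -- find a negative entry
  obtain ⟨k, hk⟩ : ∃ k, lam k < 0 := by
    by_contra h
    push_neg at h
    apply hne
    funext i
    exact (Finset.sum_eq_zero_iff_of_nonneg (fun i _ => h i)).mp hs1 i (Finset.mem_univ i)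
  obtain ⟨N, rfl⟩ : ∃ N, n = N + 1 := ⟨n - 1, by omega⟩
  have hN : 2 ≤ N := by omega
  haveI : NeZero N := ⟨by omega⟩
  set φ := finSuccEquiv' k with hφ
  set t : ℝ := -lam k / N with htdef
  have hNpos : (0 : ℝ) < N := by exact_mod_cast Nat.pos_of_ne_zero (by omega)
  have ht : 0 < t := div_pos (by linarith) hNpos
  set u : Fin (N+1) → (Fin (N+1) → ℝ) := fun i j => if j = i then -(N : ℝ) else 1 with hu
  -- the key averaged vector
  have hw : t • u k ∈ closure Γ := by
    set σp : Fin N → Equiv.Perm (Fin (N+1)) := fun m =>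
      φ.trans ((Equiv.optionCongr (Equiv.addRight m)).trans φ.symm) with hσp
    have hσapp : ∀ m j, σp m j = φ.symm (Option.map (· + m) (φ j)) := by
      intro m j; rfl
    have hsum : ∑ m : Fin N, (N : ℝ)⁻¹ • (lam ∘ σp m) ∈ closure Γ := by
      apply hCconv.sum_mem (fun _ _ => by positivity)
      · rw [Finset.sum_const, Finset.card_univ, Fintype.card_fin, nsmul_eq_mul]
        field_simp
      · exact fun m _ => hperm _ lam hcl
    have hkey : ∑ m' : Fin N, lam (φ.symm (some m')) = -lam k := by
      have h1 : ∑ o : Option (Fin N), lam (φ.symm o) = ∑ i, lam i :=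
        Equiv.sum_comp φ.symm lam
      rw [Fintype.sum_option, hs1, finSuccEquiv'_symm_none] at h1
      linarith
    have heq : t • u k = ∑ m : Fin N, (N : ℝ)⁻¹ • (lam ∘ σp m) := by
      funext j
      simp only [Finset.sum_apply, Pi.smul_apply, smul_eq_mul, Function.comp_apply]
      by_cases hj : j = k
      · subst hj
        have : ∀ m : Fin N, σp m j = j := by
          intro m
          rw [hσapp, show φ j = none from finSuccEquiv'_at j, Option.map_none,
            finSuccEquiv'_symm_none]
        rw [Finset.sum_congr rfl (fun m _ => by rw [this m])]
        rw [Finset.sum_const, Finset.card_univ, Fintype.card_fin, nsmul_eq_mul]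
        simp only [hu, if_pos rfl, htdef]
        field_simp
      · obtain ⟨jj, hjj⟩ : ∃ jj, φ j = some jj := by
          cases h : φ j with
          | none =>
            exfalso
            apply hj
            have := congrArg φ.symm h
            rwa [Equiv.symm_apply_apply, finSuccEquiv'_symm_none] at this
          | some a => exact ⟨a, rfl⟩
        have hstep : ∀ m : Fin N, σp m j = φ.symm (some (jj + m)) := by
          intro m; rw [hσapp, hjj]; rfl
        rw [Finset.sum_congr rfl (fun m _ => by rw [hstep m])]
        have hre : ∑ m : Fin N, (N : ℝ)⁻¹ * lam (φ.symm (some (jj + m)))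
            = ∑ m' : Fin N, (N : ℝ)⁻¹ * lam (φ.symm (some m')) := by
          exact Fintype.sum_equiv (Equiv.addLeft jj) _ _ (fun m => rfl)
        rw [hre, ← Finset.mul_sum, hkey]
        simp only [hu, if_neg hj, htdef]
        field_simp
    rw [heq]
    exact hsum
  -- all coordinate versions, with arbitrary nonnegative scale
  have huC : ∀ i : Fin (N+1), ∀ c : ℝ, 0 ≤ c → c • u i ∈ closure Γ := by
    intro i c hc
    have hui : t • u i ∈ closure Γ := by
      have : t • u i = (t • u k) ∘ (Equiv.swap k i) := by
        funext j
        simp only [Function.comp_apply, Pi.smul_apply, smul_eq_mul, hu]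
        rcases eq_or_ne j i with rfl | hji
        · simp [Equiv.swap_apply_right]
        · rcases eq_or_ne j k with rfl | hjk
          · simp [Equiv.swap_apply_left, hji, Ne.symm hji]
          · simp [Equiv.swap_apply_of_ne_of_ne hjk hji, hjk, hji]
      rw [this]
      exact hperm _ _ hw
    rcases eq_or_lt_of_le hc with rfl | hcpos
    · rw [zero_smul]; exact h0
    · have : c • u i = (c / t) • (t • u i) := by
        rw [smul_smul]; congr 1; field_simp
      rw [this]
      exact hscale _ (div_pos hcpos ht) _ hui
  -- conclude
  apply Set.Subset.antisymm hup
  intro y hy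
  have hS : 0 < ∑ i, y i := by
    have := hy 1 le_rfl le_rfl
    rwa [esymm_one'] at this
  set S : ℝ := ∑ i, y i with hSdef
  set M : ℝ := ∑ i, |y i| with hMdef
  have hM : ∀ i, y i ≤ M := by
    intro i
    calc y i ≤ |y i| := le_abs_self _
    _ ≤ M := Finset.single_le_sum (fun j _ => abs_nonneg (y j)) (Finset.mem_univ i)
  set c : Fin (N+1) → ℝ := fun i => (M - y i) / (N + 1) with hcdef
  have hc0 : ∀ i, 0 ≤ c i := fun i => div_nonneg (by linarith [hM i]) (by positivity)
  have hn1pos : (0 : ℝ) < (N : ℝ) + 1 := by positivity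
  set z : Fin (N+1) → ℝ := fun _ => S / ((N : ℝ) + 1) with hzdef
  have hzΓ : z ∈ Γ := hlow (const_mem' (N+1) _ (div_pos hS hn1pos))
  have hsumC : ∑ i, c i • u i ∈ closure Γ := by
    apply Finset.sum_induction _ (· ∈ closure Γ)
      (fun a b ha hb => haddC a ha b hb) h0
    exact fun i _ => huC i (c i) (hc0 i)
  have hdecomp : y = z + ∑ i, c i • u i := by
    funext j
    simp only [Pi.add_apply, Finset.sum_apply, Pi.smul_apply, smul_eq_mul]
    have hterm : ∀ i : Fin (N+1), c i * u i j
        = c i + (if j = i then -(c i) * ((N : ℝ) + 1) else 0) := by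
      intro i
      simp only [hu]
      by_cases h : j = i
      · rw [if_pos h, if_pos h]; ring
      · rw [if_neg h, if_neg h]; ring
    rw [Finset.sum_congr rfl (fun i _ => hterm i), Finset.sum_add_distrib,
      Finset.sum_ite_eq Finset.univ j (fun i => -(c i) * ((N : ℝ) + 1)),
      if_pos (Finset.mem_univ j)]
    have hCsum : ∑ i, c i = M - S / ((N : ℝ) + 1) := by
      simp only [hcdef]
      rw [← Finset.sum_div, Finset.sum_sub_distrib, ← hSdef, Finset.sum_const,
        Finset.card_univ, Fintype.card_fin, nsmul_eq_mul]
      push_cast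
      field_simp
    rw [hCsum]
    simp only [hzdef, hcdef]
    field_simp
    ring
  rw [hdecomp]
  exact haddΓ z hzΓ _ hsumC
end

section
/- Let Γ ⊂ ℝⁿ be an open, convex, symmetric cone with vertex at the origin satisfying Γₙ⁺ ⊆ Γ ⊆ Γ₁⁺. Then (1,0,…,0) ∈ Γ if and only if there exist a cone Γ̃ ⊂ ℝⁿ satisfying the same properties (open, convex, symmetric cone with Γₙ⁺ ⊆ Γ̃ ⊆ Γ₁⁺) and a number τ < 1 (τ ∈ (0,1)) such that Γ = (Γ̃)^τ, where (Γ̃)^τ = {λ : τλ + (1−τ)σ₁(λ)e ∈ Γ̃}. -/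
open Finset

/-- The transformation `λ ↦ λ^τ = τλ + (1-τ)σ₁(λ)e`. -/
def lamT (n : ℕ) (τ : ℝ) (x : Fin n → ℝ) : Fin n → ℝ :=
  fun i => τ * x i + (1 - τ) * ∑ j, x j

lemma esymm_zero' (n : ℕ) (x : Fin n → ℝ) : esymm n 0 x = 1 := by
  simp [esymm]

lemma esymm_pos_of_pos (n j : ℕ) (x : Fin n → ℝ) (hjn : j ≤ n)
    (hx : ∀ i, 0 < x i) : 0 < esymm n j x := by
  apply Finset.sum_pos
  · intro s _
    exact Finset.prod_pos fun i _ => hx i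
  · rw [Finset.nonempty_iff_ne_empty]
    simp only [ne_eq, powersetCard_eq_empty, not_lt]
    simpa using hjn

lemma prod_eq_sum_esymm (n : ℕ) (x : Fin n → ℝ) (t : ℝ) :
    ∏ i, (x i + t) = ∑ k ∈ range (n + 1), esymm n k x * t ^ (n - k) := by
  rw [Finset.prod_add, Finset.sum_powerset]
  simp only [card_univ, Fintype.card_fin]
  refine Finset.sum_congr rfl fun k hk => ?_
  rw [esymm, Finset.sum_mul]
  refine Finset.sum_congr rfl fun s hs => ?_
  rw [Finset.mem_powersetCard] at hs
  rw [Finset.prod_const, Finset.card_sdiff_of_subset hs.1, card_univ, Fintype.card_fin, hs.2]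

lemma gammaN_pos {n : ℕ} (hn : 1 ≤ n) {y : Fin n → ℝ} (hy : y ∈ GammaK n n) (i : Fin n) :
    0 < y i := by
  by_contra h
  push_neg at h
  have ht : (0:ℝ) ≤ -y i := by linarith
  have h0 : ∏ j, (y j + (-y i)) = 0 :=
    Finset.prod_eq_zero (Finset.mem_univ i) (by ring)
  have hpos : 0 < ∏ j, (y j + (-y i)) := by
    rw [prod_eq_sum_esymm]
    apply Finset.sum_pos'
    · intro k hk
      rcases Nat.eq_zero_or_pos k with rfl | hk1
      · rw [esymm_zero']; positivity
      · have := hy k hk1 (by simpa using Nat.lt_succ_iff.mp (Finset.mem_range.mp hk))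
        positivity
    · refine ⟨n, Finset.mem_range.mpr (Nat.lt_succ_self n), ?_⟩
      have := hy n hn le_rfl
      simpa using this
  linarith

lemma swap_single {n : ℕ} (i0 i j : Fin n) :
    (Pi.single i0 (1:ℝ) : Fin n → ℝ) (Equiv.swap i0 i j) = (Pi.single i 1 : Fin n → ℝ) j := by
  rcases eq_or_ne j i with rfl | hj
  · rw [Equiv.swap_apply_right]; simp
  · rcases eq_or_ne j i0 with rfl | hj0
    · have hii0 : i ≠ j := fun h => hj h.symm
      simp [Equiv.swap_apply_left, Pi.single_apply, hii0, hj.symm]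
    · rw [Equiv.swap_apply_of_ne_of_ne hj0 hj]
      simp [Pi.single_apply, hj0, hj]

theorem stmt7 (n : ℕ) (hn : 3 ≤ n) (Γ : Set (Fin n → ℝ))
    (hopen : IsOpen Γ) (hconv : Convex ℝ Γ)
    (hsym : ∀ σ : Equiv.Perm (Fin n), ∀ x ∈ Γ, x ∘ σ ∈ Γ)
    (hcone : ∀ s : ℝ, 0 < s → ∀ x ∈ Γ, s • x ∈ Γ)
    (hlow : GammaK n n ⊆ Γ) (hup : Γ ⊆ GammaK n 1) :
    Pi.single (⟨0, by omega⟩ : Fin n) (1 : ℝ) ∈ Γ ↔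
      ∃ (Γ' : Set (Fin n → ℝ)) (τ : ℝ),
        IsOpen Γ' ∧ Convex ℝ Γ' ∧
        (∀ σ : Equiv.Perm (Fin n), ∀ x ∈ Γ', x ∘ σ ∈ Γ') ∧
        (∀ s : ℝ, 0 < s → ∀ x ∈ Γ', s • x ∈ Γ') ∧
        GammaK n n ⊆ Γ' ∧ Γ' ⊆ GammaK n 1 ∧
        0 < τ ∧ τ < 1 ∧ Γ = {x | lamT n τ x ∈ Γ'} := by
  set i0 : Fin n := ⟨0, by omega⟩ with hi0
  have hn1 : (1:ℝ) ≤ (n:ℝ) := by exact_mod_cast Nat.one_le_of_lt hn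
  have hnpos : (0:ℝ) < n := by positivity
  constructor
  · intro h1
    -- choose μ
    obtain ⟨ε, hε, hball⟩ := Metric.isOpen_iff.mp hopen _ h1
    set μ : ℝ := min (ε/2) (1/(2*n)) with hμdef
    have hμ0 : 0 < μ := lt_min (by linarith) (by positivity)
    have hμn : (n:ℝ) * μ ≤ 1/2 := by
      have : μ ≤ 1/(2*n) := min_le_right _ _
      calc (n:ℝ) * μ ≤ (n:ℝ) * (1/(2*n)) := by nlinarith
        _ = 1/2 := by field_simp
    have hnum : 0 < 1 - (n:ℝ) * μ := by linarith
    have hd : 0 < 1 - ((n:ℝ) - 1) * μ := by nlinarith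
    -- the shifted basis vector is in Γ
    have hp : (fun j => ((Pi.single i0 (1:ℝ) : Fin n → ℝ)) j - μ) ∈ Γ := by
      apply hball
      rw [Metric.mem_ball, dist_pi_lt_iff hε]
      intro j
      rw [Real.dist_eq]
      have : |((Pi.single i0 (1:ℝ) : Fin n → ℝ)) j - μ - ((Pi.single i0 (1:ℝ) : Fin n → ℝ)) j| = μ := by
        rw [abs_of_nonpos (by linarith)]; ring
      rw [this]
      have : μ ≤ ε/2 := min_le_left _ _
      linarith
    have hbasis : ∀ i : Fin n, (fun j => ((Pi.single i (1:ℝ) : Fin n → ℝ)) j - μ) ∈ Γ := by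
      intro i
      have := hsym (Equiv.swap i0 i) _ hp
      convert this using 1
      funext j
      simp only [Function.comp_apply]
      rw [swap_single]
    -- positive vectors shifted by μ·σ₁·e are in Γ
    have hμΓ : ∀ y : Fin n → ℝ, (∀ i, 0 < y i) →
        (fun j => y j - μ * ∑ i, y i) ∈ Γ := by
      intro y hy
      set S : ℝ := ∑ i, y i with hS
      have hSpos : 0 < S := Finset.sum_pos (fun i _ => hy i) ⟨i0, Finset.mem_univ _⟩
      have hz : ∀ i : Fin n, (S • fun j => ((Pi.single i (1:ℝ) : Fin n → ℝ)) j - μ) ∈ Γ :=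
        fun i => hcone S hSpos _ (hbasis i)
      have hmem := hconv.sum_mem (t := (univ : Finset (Fin n)))
        (w := fun i => y i / S) (fun i _ => le_of_lt (div_pos (hy i) hSpos))
        (by rw [← Finset.sum_div]; field_simp; exact hS.symm)
        (fun i _ => hz i)
      beta_reduce at hmem
      have heq : (∑ i : Fin n, (y i / S) • S • fun j => ((Pi.single i (1:ℝ) : Fin n → ℝ)) j - μ)
          = fun j => y j - μ * ∑ i, y i := by
        funext j
        rw [Finset.sum_apply]
        have hterm : ∀ i ∈ (univ : Finset (Fin n)),
            ((y i / S) • S • fun j => ((Pi.single i (1:ℝ) : Fin n → ℝ)) j - μ) j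
            = y i * ((Pi.single i (1:ℝ) : Fin n → ℝ)) j - y i * μ := by
          intro i _
          simp only [Pi.smul_apply, smul_eq_mul]
          field_simp
        rw [Finset.sum_congr rfl hterm, Finset.sum_sub_distrib, ← Finset.sum_mul]
        have h1' : ∑ i : Fin n, y i * ((Pi.single i (1:ℝ) : Fin n → ℝ)) j = y j := by
          simp [Pi.single_apply, mul_ite]
        rw [h1']
        ring
      rwa [heq] at hmem
    -- define τ and Γ'
    obtain ⟨τ, hτ0, hτ1, hkey⟩ : ∃ τ : ℝ, 0 < τ ∧ τ < 1 ∧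
        1 - τ = μ * ((n:ℝ) - ((n:ℝ)-1)*τ) := by
      refine ⟨(1 - (n:ℝ)*μ)/(1 - ((n:ℝ)-1)*μ), div_pos hnum hd, ?_, ?_⟩
      · rw [div_lt_one hd]; nlinarith
      · rw [div_eq_mul_inv]
        have hinv := mul_inv_cancel₀ hd.ne'
        linear_combination (-(1 - (n:ℝ)*μ)) * hinv
    have hτne : τ ≠ 0 := ne_of_gt hτ0
    set g : (Fin n → ℝ) → (Fin n → ℝ) :=
      fun y j => (1/τ) * (y j - μ * ∑ i, y i) with hgdef
    set Γ' : Set (Fin n → ℝ) := {y | g y ∈ Γ} with hΓ'def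
    have hsumc : Continuous fun y : Fin n → ℝ => ∑ i, y i :=
      continuous_finset_sum _ fun i _ => continuous_apply i
    have hgc : Continuous g := continuous_pi fun j =>
      continuous_const.mul ((continuous_apply j).sub (continuous_const.mul hsumc))
    have hglam : ∀ x : Fin n → ℝ, g (lamT n τ x) = x := by
      intro x
      funext j
      have hS : ∑ i, lamT n τ x i = ((n:ℝ) - ((n:ℝ)-1)*τ) * ∑ i, x i := by
        simp only [lamT, Finset.sum_add_distrib, ← Finset.mul_sum, Finset.sum_const,
          card_univ, Fintype.card_fin, nsmul_eq_mul]
        ring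
      simp only [hgdef]
      rw [hS]
      simp only [lamT]
      field_simp
      linear_combination (∑ i, x i) * hkey
    refine ⟨Γ', τ, hopen.preimage hgc, ?_, ?_, ?_, ?_, ?_, hτ0, hτ1, ?_⟩
    · -- convex
      intro y hy z hz a b ha hb hab
      have : g (a • y + b • z) = a • g y + b • g z := by
        funext j
        simp only [hgdef, Pi.add_apply, Pi.smul_apply, smul_eq_mul,
          Finset.sum_add_distrib, ← Finset.mul_sum]
        ring
      show g (a • y + b • z) ∈ Γ
      rw [this]
      exact hconv hy hz ha hb hab
    · -- symmetric
      intro σ y hy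
      show g (y ∘ σ) ∈ Γ
      have : g (y ∘ σ) = (g y) ∘ σ := by
        funext j
        simp only [hgdef, Function.comp_apply]
        rw [Equiv.sum_comp σ y]
      rw [this]
      exact hsym σ _ hy
    · -- cone
      intro s hs y hy
      show g (s • y) ∈ Γ
      have : g (s • y) = s • g y := by
        funext j
        simp only [hgdef, Pi.smul_apply, smul_eq_mul, ← Finset.mul_sum]
        ring
      rw [this]
      exact hcone s hs _ hy
    · -- GammaK n n ⊆ Γ'
      intro y hy
      have hyi := gammaN_pos (by omega) hy
      show g y ∈ Γ
      have : g y = (1/τ) • fun j => y j - μ * ∑ i, y i := by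
        funext j; simp [hgdef]
      rw [this]
      exact hcone _ (by positivity) _ (hμΓ y hyi)
    · -- Γ' ⊆ GammaK n 1
      intro y hy j hj1 hjle
      obtain rfl : j = 1 := le_antisymm hjle hj1
      have h2 := hup hy 1 le_rfl le_rfl
      rw [esymm_one'] at h2 ⊢
      have hSg : ∑ i, g y i = (1/τ) * (1 - (n:ℝ)*μ) * ∑ i, y i := by
        simp only [hgdef, ← Finset.mul_sum, Finset.sum_sub_distrib, Finset.sum_const,
          card_univ, Fintype.card_fin, nsmul_eq_mul]
        ring
      rw [hSg] at h2
      have hc : 0 < (1/τ) * (1 - (n:ℝ)*μ) := by positivity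
      nlinarith
    · -- Γ = preimage
      ext x
      simp only [Set.mem_setOf_eq]
      show x ∈ Γ ↔ g (lamT n τ x) ∈ Γ
      rw [hglam x]
  · rintro ⟨Γ', τ, _, _, _, _, hlow', _, hτ0, hτ1, hΓeq⟩
    rw [hΓeq]
    show lamT n τ (Pi.single i0 1) ∈ Γ'
    apply hlow'
    intro j hj1 hjn
    apply esymm_pos_of_pos n j _ hjn
    intro i
    simp only [lamT]
    have hsum : ∑ j, ((Pi.single i0 (1:ℝ) : Fin n → ℝ)) j = 1 := by
      simp
    rw [hsum]
    rcases eq_or_ne i i0 with rfl | hi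
    · rw [Pi.single_eq_same]; nlinarith
    · rw [Pi.single_apply, if_neg hi]; nlinarith
end
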